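/- Let u = ∑_l l^{-(s/d+1/2-1/q)} κ^{-1/q} ξ_l ψ_l with ξ_l i.i.d. with density ∝ exp(-|x|^q/2), q ≥ 1, s > d/q, and {ψ_l} an r-regular wavelet basis of L²(𝕋^d) with r > s. Then for any t < s - d/q there exists r* = r*(q,d,s,t) > 0 such that E[exp(α‖u‖_{C^t})] < ∞ for all α ∈ (0, κ/(2r*)). -/

import Mathlib

open MeasureTheory Real ProbabilityTheory

lemma aux_pow_le_exp (y : ℝ) (hy : 0 ≤ y) (m : ℕ) : (y / m) ^ m ≤ Real.exp y := by
  rcases Nat.eq_zero_or_pos m with rfl | hm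
  · simpa using Real.one_le_exp hy
  · have hm' : (0:ℝ) < m := by exact_mod_cast hm
    have h1 : y / m ≤ Real.exp (y / m) :=
      le_trans (by linarith [div_nonneg hy hm'.le]) (Real.add_one_le_exp _)
    calc (y/m)^m ≤ (Real.exp (y/m))^m := pow_le_pow_left₀ (div_nonneg hy hm'.le) h1 m
    _ = Real.exp (m * (y/m)) := (Real.exp_nat_mul _ m).symm
    _ = Real.exp y := by rw [mul_comm, div_mul_cancel₀ _ hm'.ne']

lemma aux_summable {ρ γ : ℝ} (hρ : 0 < ρ) (hγ : 0 < γ) :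
    Summable (fun n : ℕ => Real.exp (-(((n:ℝ)+1) ^ γ * ρ))) := by
  set m : ℕ := ⌈2/γ⌉₊ + 1 with hm
  have hm' : (0:ℝ) < m := by positivity
  have hγm : 2 ≤ γ * m := by
    have h2 : 2/γ ≤ m := le_trans (Nat.le_ceil _) (by exact_mod_cast Nat.le_succ _)
    calc (2:ℝ) = (2/γ) * γ := by field_simp
    _ ≤ m * γ := mul_le_mul_of_nonneg_right h2 hγ.le
    _ = γ * m := mul_comm _ _
  have hbase : Summable (fun n : ℕ => ((ρ/m)^m)⁻¹ * (1/((n:ℝ)+1)^2)) := by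
    apply Summable.mul_left
    have h0 : Summable (fun n : ℕ => 1/((n:ℝ))^2) :=
      summable_one_div_nat_pow.2 one_lt_two
    have := (_root_.summable_nat_add_iff 1).2 h0
    simpa [Nat.cast_add] using this
  refine Summable.of_nonneg_of_le (fun n => (Real.exp_pos _).le) (fun n => ?_) hbase
  have hn1 : (1:ℝ) ≤ (n:ℝ)+1 := le_add_of_nonneg_left (Nat.cast_nonneg n)
  have hpos : (0:ℝ) < ((n:ℝ)+1)^γ * ρ := mul_pos (Real.rpow_pos_of_pos (by linarith) γ) hρ
  have hkey : (ρ/m)^m * ((n:ℝ)+1)^2 ≤ Real.exp (((n:ℝ)+1) ^ γ * ρ) := by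
    have h1 : (((n:ℝ)+1)^γ * ρ / m)^m ≤ Real.exp (((n:ℝ)+1) ^ γ * ρ) :=
      aux_pow_le_exp _ hpos.le m
    refine le_trans ?_ h1
    have h2 : (((n:ℝ)+1)^γ * ρ / m)^m = (ρ/m)^m * (((n:ℝ)+1)^γ)^m := by
      rw [mul_comm (((n:ℝ)+1)^γ) ρ, mul_div_assoc, mul_pow]
      ring
    rw [h2]
    have h3 : ((n:ℝ)+1)^(2:ℕ) ≤ (((n:ℝ)+1)^γ)^m := by
      have h5 : ((n:ℝ)+1)^((2:ℕ):ℝ) ≤ ((n:ℝ)+1)^(γ*(m:ℝ)) :=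
        Real.rpow_le_rpow_of_exponent_le hn1 (by exact_mod_cast hγm)
      rw [Real.rpow_natCast] at h5
      rwa [← Real.rpow_natCast (((n:ℝ)+1)^γ) m, ← Real.rpow_mul (by positivity)]
    have hC : (0:ℝ) < (ρ/m)^m := by positivity
    nlinarith [hC]
  rw [Real.exp_neg]
  calc (Real.exp (((n:ℝ)+1)^γ*ρ))⁻¹ ≤ ((ρ/m)^m * ((n:ℝ)+1)^2)⁻¹ := by
        apply inv_anti₀ (by positivity) hkey
  _ = ((ρ/m)^m)⁻¹ * (1/((n:ℝ)+1)^2) := by rw [mul_inv]; ring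

/-- exp(-|x|/8) ≤ 512 / (1+x²) -/
lemma aux_exp_abs_le (x : ℝ) : Real.exp (-(|x|/8)) ≤ 512 * (1+x^2)⁻¹ := by
  have h1 : 1 + |x|/16 ≤ Real.exp (|x|/16) := Real.add_one_le_exp _ |>.trans_eq' (by ring)
  have h2 : Real.exp (|x|/8) = (Real.exp (|x|/16))^2 := by
    rw [← Real.exp_nat_mul]; norm_num; ring_nf
  have hx : 0 ≤ |x| := abs_nonneg x
  have h3 : x^2/256 ≤ Real.exp (|x|/8) := by
    rw [h2]
    have : (|x|/16)^2 ≤ (Real.exp (|x|/16))^2 :=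
      pow_le_pow_left₀ (by positivity) (by linarith) 2
    calc x^2/256 = (|x|/16)^2 := by rw [div_pow, sq_abs]; norm_num
    _ ≤ _ := this
  have h4 : (1:ℝ) ≤ Real.exp (|x|/8) := Real.one_le_exp (by positivity)
  have h5 : 1 + x^2 ≤ 512 * Real.exp (|x|/8) := by nlinarith
  have hpos : (0:ℝ) < 1 + x^2 := by positivity
  rw [Real.exp_neg, inv_le_iff_one_le_mul₀ (Real.exp_pos _)]
  have h6 : (1+x^2) * (1+x^2)⁻¹ ≤ 512 * Real.exp (|x|/8) * (1+x^2)⁻¹ :=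
    mul_le_mul_of_nonneg_right h5 (inv_nonneg.2 hpos.le)
  rw [mul_inv_cancel₀ hpos.ne'] at h6
  calc (1:ℝ) ≤ 512 * Real.exp (|x|/8) * (1+x^2)⁻¹ := h6
  _ = 512 * (1+x^2)⁻¹ * Real.exp (|x|/8) := by ring
  
theorem besov_fernique
    {Ω : Type*} [MeasurableSpace Ω] (P : Measure Ω) [IsProbabilityMeasure P]
    (q s t κ : ℝ) (d : ℕ) (hd : 1 ≤ d) (hq : 1 ≤ q) (hκ : 0 < κ)
    (hs : (d : ℝ) / q < s) (ht : t < s - (d : ℝ) / q)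
    (c : ℝ) (hc : 0 < c)
    (ξ : ℕ → Ω → ℝ) (hmeas : ∀ l, Measurable (ξ l))
    (hindep : iIndepFun ξ P)
    (hdens : ∀ l, Measure.map (ξ l) P
      = volume.withDensity (fun x => ENNReal.ofReal (c * Real.exp (-(|x| ^ q) / 2)))) :
    ∃ rstar : ℝ, 0 < rstar ∧ ∀ α : ℝ, 0 < α → α < κ / (2 * rstar) →
      Integrable (fun ω => Real.exp (α *
        ⨆ n : ℕ, ((n : ℝ) + 1) ^ ((t - s) / (d : ℝ) + 1 / q) * κ ^ (-(1 / q)) * |ξ n ω|)) P := by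
  have hq0 : (0:ℝ) < q := lt_of_lt_of_le one_pos hq
  have hd0 : (0:ℝ) < d := by exact_mod_cast hd
  set k : ℝ := κ ^ (-(1/q)) with hk_def
  have hk : 0 < k := Real.rpow_pos_of_pos hκ _
  have hkk : κ ^ (1/q) * k = 1 := by
    rw [hk_def, ← Real.rpow_add hκ]; simp
  set β : ℝ := (t - s) / (d:ℝ) + 1 / q with hβ_def
  have hβneg : β < 0 := by
    have h1 : t - s < -((d:ℝ)/q) := by linarith
    have h2 : (t-s)/d < -((d:ℝ)/q)/d := div_lt_div_of_pos_right h1 hd0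
    have h3 : -((d:ℝ)/q)/d = -(1/q) := by field_simp
    rw [hβ_def]; rw [h3] at h2; linarith
  set γ : ℝ := -β with hγ_def
  have hγ : 0 < γ := neg_pos.2 hβneg
  refine ⟨2 * κ * k, by positivity, ?_⟩
  intro α hα hα'
  -- the weight A n and the threshold M n
  set A : ℕ → ℝ := fun n => ((n:ℝ)+1) ^ β * k with hA_def
  set M : ℕ → ℝ := fun n => ((n:ℝ)+1) ^ γ * κ ^ (1/q) with hM_def
  have hn1 : ∀ n : ℕ, (1:ℝ) ≤ (n:ℝ)+1 := fun n => le_add_of_nonneg_left (Nat.cast_nonneg n)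
  have hn0 : ∀ n : ℕ, (0:ℝ) < (n:ℝ)+1 := fun n => lt_of_lt_of_le one_pos (hn1 n)
  have hApos : ∀ n, 0 < A n := fun n => mul_pos (Real.rpow_pos_of_pos (hn0 n) _) hk
  have hMpos : ∀ n, 0 < M n := fun n =>
    mul_pos (Real.rpow_pos_of_pos (hn0 n) _) (Real.rpow_pos_of_pos hκ _)
  have hAM : ∀ n, A n * M n = 1 := by
    intro n
    have : ((n:ℝ)+1) ^ β * ((n:ℝ)+1) ^ γ = 1 := by
      rw [← Real.rpow_add (hn0 n), hγ_def]; simp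
    calc A n * M n = (((n:ℝ)+1) ^ β * ((n:ℝ)+1) ^ γ) * (κ ^ (1/q) * k) := by ring
    _ = 1 := by rw [this, hkk]; norm_num
  have hA_le : ∀ n, A n ≤ k := by
    intro n
    have : ((n:ℝ)+1) ^ β ≤ 1 := Real.rpow_le_one_of_one_le_of_nonpos (hn1 n) hβneg.le
    calc A n ≤ 1 * k := mul_le_mul_of_nonneg_right this hk.le
    _ = k := one_mul k
  -- bound on α * A n
  have hαA : ∀ n, α * A n ≤ 1/4 := by
    intro n
    have h1 : α * k < κ / (2 * (2 * κ * k)) * k := mul_lt_mul_of_pos_right hα' hk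
    have h2 : κ / (2 * (2 * κ * k)) * k = 1/4 := by
      field_simp
      ring
    have h3 : α * A n ≤ α * k := mul_le_mul_of_nonneg_left (hA_le n) hα.le
    linarith
  -- the majorant y n
  set y : ℕ → Ω → ℝ := fun n ω => Real.exp ((α * A n + 1/8) * |ξ n ω| - M n / 8) with hy_def
  -- key pointwise bound
  have hkey : ∀ n ω, Real.exp (α * (A n * |ξ n ω|)) ≤ max (Real.exp α) (y n ω) := by
    intro n ω
    by_cases h : |ξ n ω| ≤ M n
    · refine le_max_of_le_left (Real.exp_le_exp.2 ?_)
      have : A n * |ξ n ω| ≤ A n * M n := mul_le_mul_of_nonneg_left h (hApos n).le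
      rw [hAM n] at this
      calc α * (A n * |ξ n ω|) ≤ α * 1 := mul_le_mul_of_nonneg_left this hα.le
      _ = α := mul_one α
    · push_neg at h
      refine le_max_of_le_right (Real.exp_le_exp.2 ?_)
      have habs : 0 ≤ |ξ n ω| := abs_nonneg _
      nlinarith
  -- measurability
  have hSmeas : Measurable (fun ω => ⨆ n : ℕ, A n * |ξ n ω|) :=
    Measurable.iSup (fun n => (measurable_const.mul (hmeas n).abs))
  have hfmeas : Measurable (fun ω => Real.exp (α * ⨆ n : ℕ, A n * |ξ n ω|)) :=
    Real.measurable_exp.comp (measurable_const.mul hSmeas)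
  refine ⟨hfmeas.aestronglyMeasurable, ?_⟩
  rw [hasFiniteIntegral_iff_ofReal (Filter.Eventually.of_forall fun ω => (Real.exp_pos _).le)]
  -- pointwise domination
  have hdom : ∀ ω, ENNReal.ofReal (Real.exp (α * ⨆ n : ℕ, A n * |ξ n ω|))
      ≤ ENNReal.ofReal (Real.exp α) + ∑' n, ENNReal.ofReal (y n ω) := by
    intro ω
    by_cases hT : (∑' n, ENNReal.ofReal (y n ω)) = ⊤
    · rw [hT, add_top]; exact le_top
    · set T := ∑' n, ENNReal.ofReal (y n ω) with hT_def
      have hyT : ∀ n, y n ω ≤ T.toReal := fun n =>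
        (ENNReal.ofReal_le_iff_le_toReal hT).1 (ENNReal.le_tsum n)
      set B : ℝ := Real.exp α + T.toReal with hB_def
      have hB1 : 1 ≤ B :=
        le_add_of_le_of_nonneg (Real.one_le_exp hα.le) ENNReal.toReal_nonneg
      have hB0 : 0 < B := lt_of_lt_of_le one_pos hB1
      have hxB : ∀ n, α * (A n * |ξ n ω|) ≤ Real.log B := by
        intro n
        rw [Real.le_log_iff_exp_le hB0]
        refine (hkey n ω).trans (max_le ?_ ?_)
        · exact le_add_of_nonneg_right ENNReal.toReal_nonneg
        · exact (hyT n).trans (le_add_of_nonneg_left (Real.exp_pos α).le)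
      have hS : (⨆ n : ℕ, A n * |ξ n ω|) ≤ Real.log B / α := by
        refine Real.iSup_le (fun n => ?_) (div_nonneg (Real.log_nonneg hB1) hα.le)
        rw [le_div_iff₀ hα, mul_comm]
        exact hxB n
      have : Real.exp (α * ⨆ n : ℕ, A n * |ξ n ω|) ≤ B := by
        rw [← Real.exp_log hB0]
        apply Real.exp_le_exp.2
        calc α * (⨆ n : ℕ, A n * |ξ n ω|) ≤ α * (Real.log B / α) :=
          mul_le_mul_of_nonneg_left hS hα.le
        _ = Real.log B := by field_simp
      calc ENNReal.ofReal (Real.exp (α * ⨆ n : ℕ, A n * |ξ n ω|))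
          ≤ ENNReal.ofReal B := ENNReal.ofReal_le_ofReal this
      _ ≤ ENNReal.ofReal (Real.exp α) + ENNReal.ofReal T.toReal := ENNReal.ofReal_add_le
      _ = ENNReal.ofReal (Real.exp α) + T := by rw [ENNReal.ofReal_toReal hT]
  -- integral bound
  have hymeas : ∀ n, Measurable (fun ω => ENNReal.ofReal (y n ω)) := fun n =>
    ENNReal.measurable_ofReal.comp (Real.measurable_exp.comp
      ((measurable_const.mul (hmeas n).abs).sub measurable_const))
  have hstep : ∫⁻ ω, ENNReal.ofReal (Real.exp (α * ⨆ n : ℕ, A n * |ξ n ω|)) ∂P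
      ≤ ENNReal.ofReal (Real.exp α) + ∑' n, ∫⁻ ω, ENNReal.ofReal (y n ω) ∂P := by
    calc ∫⁻ ω, ENNReal.ofReal (Real.exp (α * ⨆ n : ℕ, A n * |ξ n ω|)) ∂P
        ≤ ∫⁻ ω, (ENNReal.ofReal (Real.exp α) + ∑' n, ENNReal.ofReal (y n ω)) ∂P :=
          lintegral_mono hdom
    _ = ENNReal.ofReal (Real.exp α) * P Set.univ
          + ∫⁻ ω, ∑' n, ENNReal.ofReal (y n ω) ∂P := by
          rw [lintegral_add_left measurable_const, lintegral_const]
    _ = ENNReal.ofReal (Real.exp α) + ∑' n, ∫⁻ ω, ENNReal.ofReal (y n ω) ∂P := by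
          rw [measure_univ, mul_one, lintegral_tsum (fun n => (hymeas n).aemeasurable)]
  -- per-n bound
  set J : ENNReal := ∫⁻ (x : ℝ), ENNReal.ofReal ((1+x^2)⁻¹) with hJ_def
  have hJfin : J ≠ ⊤ := by
    have h := integrable_inv_one_add_sq.2
    rw [hasFiniteIntegral_iff_ofReal
      (Filter.Eventually.of_forall fun x => by positivity)] at h
    exact h.ne
  have hn_bound : ∀ n, ∫⁻ ω, ENNReal.ofReal (y n ω) ∂P
      ≤ ENNReal.ofReal (c * Real.exp (1/2) * 512 * Real.exp (-(M n)/8)) * J := by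
    intro n
    have hgmeas : Measurable (fun x : ℝ =>
        ENNReal.ofReal (Real.exp ((α * A n + 1/8) * |x| - M n / 8))) :=
      ENNReal.measurable_ofReal.comp (Real.measurable_exp.comp
        ((measurable_id.abs.const_mul _).sub measurable_const))
    have hdmeas : Measurable (fun x : ℝ =>
        ENNReal.ofReal (c * Real.exp (-(|x| ^ q) / 2))) := by
      apply ENNReal.measurable_ofReal.comp
      apply Measurable.const_mul
      apply Real.measurable_exp.comp
      exact (((Real.continuous_rpow_const (by linarith)).measurable.comp
        measurable_id.abs).neg.div_const 2)
    have h1 : ∫⁻ ω, ENNReal.ofReal (y n ω) ∂P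
        = ∫⁻ x, ENNReal.ofReal (Real.exp ((α * A n + 1/8) * |x| - M n / 8))
            ∂(Measure.map (ξ n) P) := (lintegral_map hgmeas (hmeas n)).symm
    rw [h1, hdens n, lintegral_withDensity_eq_lintegral_mul _ hdmeas hgmeas]
    have hpt : ∀ x : ℝ,
        (ENNReal.ofReal (c * Real.exp (-(|x| ^ q) / 2))
          * ENNReal.ofReal (Real.exp ((α * A n + 1/8) * |x| - M n / 8)))
        ≤ ENNReal.ofReal (c * Real.exp (1/2) * 512 * Real.exp (-(M n)/8))
          * ENNReal.ofReal ((1+x^2)⁻¹) := by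
      intro x
      rw [← ENNReal.ofReal_mul (by positivity), ← ENNReal.ofReal_mul (by positivity)]
      apply ENNReal.ofReal_le_ofReal
      have habs : 0 ≤ |x| := abs_nonneg x
      have hxq : |x| - 1 ≤ |x| ^ q := by
        by_cases hx1 : |x| ≤ 1
        · have : (0:ℝ) ≤ |x| ^ q := Real.rpow_nonneg habs q
          linarith
        · push_neg at hx1
          have h2 : |x| ^ (1:ℝ) ≤ |x| ^ q := Real.rpow_le_rpow_of_exponent_le hx1.le hq
          rw [Real.rpow_one] at h2
          linarith
      have hcomb : c * Real.exp (-(|x| ^ q) / 2) * Real.exp ((α * A n + 1/8) * |x| - M n / 8)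
          ≤ (c * Real.exp (1/2) * Real.exp (-(M n)/8)) * Real.exp (-(|x|/8)) := by
        have e1 : c * Real.exp (-(|x| ^ q) / 2) * Real.exp ((α * A n + 1/8) * |x| - M n / 8)
            = c * Real.exp (-(|x| ^ q) / 2 + ((α * A n + 1/8) * |x| - M n / 8)) := by
          rw [mul_assoc, ← Real.exp_add]
        have e2 : c * Real.exp (1/2) * Real.exp (-(M n)/8) * Real.exp (-(|x|/8))
            = c * Real.exp (1/2 + (-(M n)/8) + (-(|x|/8))) := by
          rw [Real.exp_add, Real.exp_add]; ring
        rw [e1, e2]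
        apply mul_le_mul_of_nonneg_left _ hc.le
        apply Real.exp_le_exp.2
        have hα8 : α * A n + 1/8 ≤ 3/8 := by linarith [hαA n]
        nlinarith [hαA n, habs, hxq]
      calc c * Real.exp (-(|x| ^ q) / 2) * Real.exp ((α * A n + 1/8) * |x| - M n / 8)
          ≤ (c * Real.exp (1/2) * Real.exp (-(M n)/8)) * Real.exp (-(|x|/8)) := hcomb
      _ ≤ (c * Real.exp (1/2) * Real.exp (-(M n)/8)) * (512 * (1+x^2)⁻¹) := by
            apply mul_le_mul_of_nonneg_left (aux_exp_abs_le x) (by positivity)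
      _ = c * Real.exp (1/2) * 512 * Real.exp (-(M n)/8) * (1+x^2)⁻¹ := by ring
    calc ∫⁻ x, (fun x => ENNReal.ofReal (c * Real.exp (-(|x| ^ q) / 2))) x
            * (fun x => ENNReal.ofReal (Real.exp ((α * A n + 1/8) * |x| - M n / 8))) x
        ≤ ∫⁻ x, ENNReal.ofReal (c * Real.exp (1/2) * 512 * Real.exp (-(M n)/8))
            * ENNReal.ofReal ((1+x^2)⁻¹) := lintegral_mono (fun x => hpt x)
    _ = ENNReal.ofReal (c * Real.exp (1/2) * 512 * Real.exp (-(M n)/8)) * J := by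
        have hinv : Measurable (fun x : ℝ => ENNReal.ofReal ((1+x^2)⁻¹)) :=
          Measurable.ennreal_ofReal (((measurable_id.pow_const 2).const_add 1).inv)
        rw [lintegral_const_mul _ hinv]
  -- summability of the series of constants
  have hsum : Summable (fun n : ℕ => Real.exp (-(M n)/8)) := by
    have h := aux_summable (ρ := κ ^ (1/q) / 8) (γ := γ)
      (by positivity) hγ
    refine h.congr (fun n => ?_)
    congr 1
    rw [hM_def]
    ring
  have htsum : (∑' n, ENNReal.ofReal (c * Real.exp (1/2) * 512 * Real.exp (-(M n)/8))) ≠ ⊤ := by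
    rw [← ENNReal.ofReal_tsum_of_nonneg (fun n => by positivity)
      (by exact (hsum.mul_left _))]
    exact ENNReal.ofReal_ne_top
  -- conclude
  refine lt_of_le_of_lt hstep ?_
  apply ENNReal.add_lt_top.2
  constructor
  · exact ENNReal.ofReal_lt_top
  · calc ∑' n, ∫⁻ ω, ENNReal.ofReal (y n ω) ∂P
        ≤ ∑' n, ENNReal.ofReal (c * Real.exp (1/2) * 512 * Real.exp (-(M n)/8)) * J :=
          ENNReal.tsum_le_tsum hn_bound
    _ = (∑' n, ENNReal.ofReal (c * Real.exp (1/2) * 512 * Real.exp (-(M n)/8))) * J :=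
          ENNReal.tsum_mul_right
    _ < ⊤ := ENNReal.mul_lt_top (lt_top_iff_ne_top.2 htsum) (lt_top_iff_ne_top.2 hJfin)
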